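/- arXiv:0808.4067 — 2 statements merged into one kernel-verified Lean document; each statement's English description precedes it below -/
import Mathlib

section
/- Let (X_t) be a Galton–Watson process with Poisson(1+ε) offspring started with one particle, where 0 < ε < 1/10. If t ≥ 1 satisfies εt < 1/10, then E(e^{|X_t|/(20t)}) ≤ 1 + 1/(10t), and consequently P(|X_t| ≥ N) ≤ t^{−1} e^{−N/(20t)} for all N ≥ 20t. -/
open ProbabilityTheory
open scoped NNReal ENNReal

/-- Generation sizes of a Galton–Watson process with Poisson(r) offspring distribution,
started from `N` particles. -/
noncomputable def gwPoisson (r : NNReal) (N : ℕ) : ℕ → PMF ℕ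
  | 0 => PMF.pure N
  | t + 1 => (gwPoisson r N t).bind fun k => poissonPMF (r * (k : NNReal))

lemma poisson_mgf (μ : ℝ≥0) (s : ℝ) (hs : 0 ≤ s) :
    ∑' n : ℕ, ENNReal.ofReal (s ^ n) * poissonPMF μ n
      = ENNReal.ofReal (Real.exp (μ * (s - 1))) := by
  have hsum : HasSum (fun n : ℕ => s ^ n * poissonPMFReal μ n)
      (Real.exp (μ * (s - 1))) := by
    unfold poissonPMFReal
    have h1 : HasSum (fun n : ℕ => (s * μ) ^ n / (n.factorial : ℝ)) (Real.exp (s * μ)) := by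
      rw [Real.exp_eq_exp_ℝ]
      exact NormedSpace.expSeries_div_hasSum_exp (s * μ)
    have h2 := h1.mul_left (Real.exp (-μ))
    have heq : (fun n : ℕ => Real.exp (-(μ:ℝ)) * ((s * μ) ^ n / (n.factorial : ℝ)))
        = fun n : ℕ => s ^ n * (Real.exp (-(μ:ℝ)) * (μ:ℝ) ^ n / (n.factorial : ℝ)) := by
      ext n; rw [mul_pow]; ring
    rw [heq] at h2
    have h3 : Real.exp (μ * (s - 1)) = Real.exp (-μ) * Real.exp (s * μ) := by
      rw [← Real.exp_add]; ring_nf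
    rw [h3]; exact h2
  have hterm : ∀ n : ℕ, ENNReal.ofReal (s ^ n) * poissonPMF μ n
      = ENNReal.ofReal (s ^ n * poissonPMFReal μ n) := by
    intro n
    rw [show poissonPMF μ n = ENNReal.ofReal (poissonPMFReal μ n) from rfl,
      ← ENNReal.ofReal_mul (by positivity)]
  simp_rw [hterm]
  rw [← ENNReal.ofReal_tsum_of_nonneg (fun n => ?_) hsum.summable, hsum.tsum_eq]
  have := poissonPMFReal_nonneg (r := μ) (n := n)
  positivity

lemma gw_mgf (r : ℝ≥0) (j : ℕ) (s : ℝ) (hs : 0 ≤ s) :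
    ∑' k : ℕ, ENNReal.ofReal (s ^ k) * gwPoisson r 1 j k
      = ENNReal.ofReal ((fun x => Real.exp (r * (x - 1)))^[j] s) := by
  induction j generalizing s with
  | zero =>
    simp only [Function.iterate_zero, id_eq, gwPoisson]
    rw [tsum_eq_single 1]
    · simp [PMF.pure_apply, pow_one]
    · intro k hk; simp [PMF.pure_apply, hk]
  | succ j ih =>
    have inner : ∀ m : ℕ, ∑' k : ℕ, ENNReal.ofReal (s ^ k)
          * (gwPoisson r 1 j m * poissonPMF (r * m) k)
        = ENNReal.ofReal ((Real.exp ((r:ℝ) * (s - 1))) ^ m) * gwPoisson r 1 j m := by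
      intro m
      calc ∑' k : ℕ, ENNReal.ofReal (s ^ k) * (gwPoisson r 1 j m * poissonPMF (r * m) k)
          = gwPoisson r 1 j m * ∑' k : ℕ, ENNReal.ofReal (s ^ k) * poissonPMF (r * m) k := by
            rw [← ENNReal.tsum_mul_left]; congr 1; ext k; ring
        _ = gwPoisson r 1 j m * ENNReal.ofReal (Real.exp ((r * m : ℝ≥0) * (s - 1))) := by
            rw [poisson_mgf _ _ hs]
        _ = ENNReal.ofReal ((Real.exp ((r:ℝ) * (s - 1))) ^ m) * gwPoisson r 1 j m := by
            rw [mul_comm]; congr 2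
            rw [← Real.exp_nat_mul]; push_cast; ring_nf
    have key : ∑' k : ℕ, ENNReal.ofReal (s ^ k) * gwPoisson r 1 (j+1) k
        = ∑' m : ℕ, ENNReal.ofReal ((Real.exp ((r:ℝ) * (s - 1))) ^ m) * gwPoisson r 1 j m := by
      simp only [gwPoisson, PMF.bind_apply]
      simp_rw [← ENNReal.tsum_mul_left]
      rw [ENNReal.tsum_comm]
      congr 1; ext m
      exact inner m
    rw [key, ih _ (Real.exp_pos _).le, Function.iterate_succ_apply]

lemma exp_sub_one_le (x : ℝ) (hx : 0 ≤ x) : Real.exp x - 1 ≤ x * Real.exp x := by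
  have h := Real.add_one_le_exp (-x)
  have hp := Real.exp_pos x
  have h2 : (1 - x) * Real.exp x ≤ Real.exp (-x) * Real.exp x := by nlinarith
  rw [← Real.exp_add, neg_add_cancel, Real.exp_zero] at h2
  nlinarith

lemma exp_le_inv_one_sub (x : ℝ) (hx1 : x < 1) : Real.exp x ≤ 1 / (1 - x) := by
  have h := Real.add_one_le_exp (-x)
  have hp := Real.exp_pos x
  have h2 : (1 - x) * Real.exp x ≤ Real.exp (-x) * Real.exp x := by nlinarith
  rw [← Real.exp_add, neg_add_cancel, Real.exp_zero] at h2
  rw [le_div_iff₀ (by linarith)]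
  linarith

lemma iterate_bound (ε : ℝ) (hε0 : 0 < ε) (hε1 : ε < 1 / 10)
    (r : NNReal) (hr : (r : ℝ) = 1 + ε) (t : ℕ) (ht : 1 ≤ t) (hεt : ε * (t : ℝ) < 1 / 10) :
    (fun x => Real.exp ((r:ℝ) * (x - 1)))^[t] (Real.exp (1 / (20 * (t:ℝ))))
      ≤ 1 + 1 / (10 * (t : ℝ)) := by
  obtain ⟨g, hgdef⟩ : ∃ g : ℝ → ℝ, (fun x => Real.exp ((r:ℝ) * (x - 1))) = g := ⟨_, rfl⟩
  obtain ⟨T, hTdef⟩ : ∃ T : ℝ, (t : ℝ) = T := ⟨_, rfl⟩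
  rw [hgdef, hTdef]
  rw [hTdef] at hεt
  have hg : ∀ x, g x = Real.exp ((r:ℝ) * (x - 1)) := fun x => by rw [← hgdef]
  have hT1 : 1 ≤ T := by rw [← hTdef]; exact_mod_cast ht
  have hT0 : 0 < T := by linarith
  obtain ⟨θ, hθdef⟩ : ∃ θ : ℝ, 1 / (20 * T) = θ := ⟨_, rfl⟩
  rw [hθdef]
  have hθ0 : 0 < θ := by rw [← hθdef]; positivity
  have hθ20 : θ ≤ 1 / 20 := by
    rw [← hθdef, div_le_div_iff₀ (by linarith) (by norm_num)]; linarith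
  obtain ⟨c, hcdef⟩ : ∃ c : ℝ, ε + 2 / (25 * T) = c := ⟨_, rfl⟩
  have hc0 : 0 < c := by rw [← hcdef]; positivity
  obtain ⟨s₀, hsdef⟩ : ∃ s₀ : ℝ, Real.exp θ = s₀ := ⟨_, rfl⟩
  rw [hsdef]
  have hs₀1 : 1 ≤ s₀ := by rw [← hsdef]; exact Real.one_le_exp hθ0.le
  have hs1 : s₀ - 1 ≤ θ * Real.exp (1/20) := by
    have h1 := exp_sub_one_le θ hθ0.le
    have h2 : Real.exp θ ≤ Real.exp (1/20) := Real.exp_le_exp.mpr hθ20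
    nlinarith [hsdef]
  have hexp120 : Real.exp (1/20 : ℝ) ≤ 20/19 := by
    have := exp_le_inv_one_sub (1/20) (by norm_num); linarith
  have habs : ∀ j : ℕ, (j : ℝ) ≤ T → (s₀ - 1) * Real.exp (c * j) ≤ 5 / (77 * T) := by
    intro j hj
    have hcj : c * j ≤ 9 / 50 := by
      have h1 : c * j ≤ c * T := mul_le_mul_of_nonneg_left hj hc0.le
      have h2 : c * T = ε * T + 2 / 25 := by rw [← hcdef]; field_simp
      nlinarith
    have h3 : Real.exp (c * j) ≤ Real.exp (9/50) := Real.exp_le_exp.mpr hcj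
    have h4 : Real.exp (9/50 : ℝ) ≤ 50/41 := by
      have := exp_le_inv_one_sub (9/50) (by norm_num); linarith
    have h5 : 0 ≤ s₀ - 1 := by linarith
    calc (s₀ - 1) * Real.exp (c * j) ≤ (θ * (20/19)) * (50/41) := by
          apply mul_le_mul _ (le_trans h3 h4) (Real.exp_pos _).le (by positivity)
          nlinarith
      _ ≤ 5 / (77 * T) := by
          rw [← hθdef, div_mul_eq_mul_div, div_mul_eq_mul_div,
            div_le_div_iff₀ (by positivity) (by positivity)]
          nlinarith
  have main : ∀ j : ℕ, j ≤ t →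
      1 ≤ g^[j] s₀ ∧ g^[j] s₀ ≤ 1 + (s₀ - 1) * Real.exp (c * j) := by
    intro j hj
    induction j with
    | zero =>
      refine ⟨by simpa using hs₀1, ?_⟩
      simp only [Function.iterate_zero, id_eq, Nat.cast_zero, mul_zero, Real.exp_zero, mul_one]
      linarith
    | succ j ih =>
      obtain ⟨ih1, ih2⟩ := ih (Nat.le_of_succ_le hj)
      have hjT : (j : ℝ) ≤ T := by
        have h := Nat.le_of_succ_le hj
        rw [← hTdef]; exact_mod_cast h
      obtain ⟨a, ha⟩ : ∃ a : ℝ, g^[j] s₀ - 1 = a := ⟨_, rfl⟩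
      have ha0 : 0 ≤ a := by linarith
      have haB : a ≤ 5 / (77 * T) := by
        have := habs j hjT; linarith
      have hra : (r:ℝ) * a ≤ 2 / (25 * T) := by
        rw [hr]
        have h1 : (1 + ε) * a ≤ (11/10) * (5 / (77 * T)) :=
          mul_le_mul (by linarith) haB ha0 (by norm_num)
        have h2 : (11:ℝ)/10 * (5 / (77 * T)) ≤ 2 / (25 * T) := by
          rw [mul_div_assoc', div_le_div_iff₀ (by positivity) (by positivity)]
          nlinarith
        linarith
      have hra0 : 0 ≤ (r:ℝ) * a := mul_nonneg (by rw [hr]; linarith) ha0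
      have hstep : g^[j+1] s₀ = Real.exp ((r:ℝ) * a) := by
        rw [Function.iterate_succ_apply', hg, ha]
      rw [hstep]
      refine ⟨Real.one_le_exp hra0, ?_⟩
      have h1 : Real.exp ((r:ℝ)*a) - 1 ≤ (r:ℝ)*a * Real.exp ((r:ℝ)*a) :=
        exp_sub_one_le _ hra0
      have h2 : Real.exp ((r:ℝ)*a) ≤ Real.exp (2/(25*T)) := Real.exp_le_exp.mpr hra
      have h3 : (r:ℝ) ≤ Real.exp ε := by rw [hr]; linarith [Real.add_one_le_exp ε]
      have e1 : (r:ℝ) * Real.exp ((r:ℝ)*a) ≤ Real.exp ε * Real.exp (2/(25*T)) :=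
        mul_le_mul h3 h2 (Real.exp_pos _).le (Real.exp_pos _).le
      have h4 : (r:ℝ)*a * Real.exp ((r:ℝ)*a) ≤ a * (Real.exp ε * Real.exp (2/(25*T))) := by
        calc (r:ℝ)*a * Real.exp ((r:ℝ)*a) = a * ((r:ℝ) * Real.exp ((r:ℝ)*a)) := by ring
          _ ≤ a * (Real.exp ε * Real.exp (2/(25*T))) := mul_le_mul_of_nonneg_left e1 ha0
      have h5 : Real.exp ε * Real.exp (2/(25*T)) = Real.exp c := by
        rw [← Real.exp_add, hcdef]
      have h6 : a * Real.exp c ≤ (s₀ - 1) * Real.exp (c * j) * Real.exp c :=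
        mul_le_mul_of_nonneg_right (by linarith) (Real.exp_pos _).le
      have h7 : (s₀ - 1) * Real.exp (c * j) * Real.exp c = (s₀ - 1) * Real.exp (c * (j+1)) := by
        rw [mul_assoc, ← Real.exp_add]; ring_nf
      rw [h5] at h4
      rw [h7] at h6
      push_cast
      linarith [h1, h4, h6]
  obtain ⟨_, hfin⟩ := main t le_rfl
  have hend : (s₀ - 1) * Real.exp (c * t) ≤ 5 / (77 * T) := by
    exact habs t (le_of_eq hTdef)
  have hlast : 5 / (77 * T) ≤ 1 / (10 * T) := by
    rw [div_le_div_iff₀ (by positivity) (by positivity)]; linarith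
  calc g^[t] s₀ ≤ 1 + (s₀ - 1) * Real.exp (c * t) := hfin
    _ ≤ 1 + 1 / (10 * T) := by linarith

lemma aux_bound (S' D x : ℝ) (h : S' + D ≤ D * (1 + x)) : S' ≤ D * x := by nlinarith

lemma aux_final (T E e1 : ℝ) (hT0 : 0 < T) (hE0 : 0 < E) (hA : 1/2 ≤ 1 - e1) :
    ((1 - e1) * E)⁻¹ * (1/(10*T)) ≤ T⁻¹ * E⁻¹ := by
  have hA0 : 0 < 1 - e1 := by linarith
  rw [mul_inv]
  have hAinv : (1 - e1)⁻¹ ≤ 2 := by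
    rw [show (2:ℝ) = ((1:ℝ)/2)⁻¹ by norm_num]
    exact inv_anti₀ (by norm_num) hA
  have step1 : (1 - e1)⁻¹ * E⁻¹ * (1/(10*T)) = ((1 - e1)⁻¹ * (1/(10*T))) * E⁻¹ := by ring
  rw [step1]
  apply mul_le_mul_of_nonneg_right _ (inv_nonneg.mpr hE0.le)
  have h1 : (1 - e1)⁻¹ * (1/(10*T)) ≤ 2 * (1/(10*T)) :=
    mul_le_mul_of_nonneg_right hAinv (by positivity)
  have h2 : (2:ℝ) * (1/(10*T)) = 1/(5*T) := by ring
  have h3 : (1:ℝ)/(5*T) ≤ 1/T := one_div_le_one_div_of_le hT0 (by linarith)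
  rw [inv_eq_one_div T]
  linarith

/-- for a Poisson(1+ε) Galton–Watson process with `0 < ε < 1/10` started with
one particle, if `t ≥ 1` and `εt < 1/10` then `E e^{|X_t|/(20t)} ≤ 1 + 1/(10t)`, and
consequently `P(|X_t| ≥ N) ≤ t⁻¹ e^{-N/(20t)}` for all `N ≥ 20t`. -/
theorem gw_mgf_and_tail_bound (ε : ℝ) (hε0 : 0 < ε) (hε1 : ε < 1 / 10)
    (r : NNReal) (hr : (r : ℝ) = 1 + ε) (t : ℕ) (ht : 1 ≤ t) (hεt : ε * (t : ℝ) < 1 / 10) :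
    (∑' k : ℕ, Real.exp ((k : ℝ) / (20 * (t : ℝ))) * ((gwPoisson r 1 t) k).toReal)
        ≤ 1 + 1 / (10 * (t : ℝ)) ∧
      ∀ N : ℕ, 20 * (t : ℝ) ≤ (N : ℝ) →
        ((gwPoisson r 1 t).toMeasure {k | N ≤ k}).toReal
          ≤ ((t : ℝ))⁻¹ * Real.exp (-((N : ℝ) / (20 * (t : ℝ)))) := by
  have hT0 : (0:ℝ) < (t:ℝ) := by
    have : (0:ℕ) < t := ht
    exact_mod_cast this
  set P : PMF ℕ := gwPoisson r 1 t with hP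
  set θ : ℝ := 1 / (20 * (t:ℝ)) with hθ
  have hθ0 : 0 < θ := by positivity
  set s₀ : ℝ := Real.exp θ with hs₀
  have hsk : ∀ k : ℕ, s₀ ^ k = Real.exp ((k:ℝ) / (20 * (t:ℝ))) := by
    intro k
    rw [hs₀, ← Real.exp_nat_mul]
    congr 1
    rw [hθ]; ring
  have hE : ∑' k : ℕ, ENNReal.ofReal (s₀ ^ k) * P k
      = ENNReal.ofReal ((fun x => Real.exp ((r:ℝ) * (x - 1)))^[t] s₀) :=
    gw_mgf r t s₀ (Real.exp_pos _).le
  have hGpos : ∀ (j : ℕ) (x : ℝ), 0 < x →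
      0 < (fun x => Real.exp ((r:ℝ) * (x - 1)))^[j] x := by
    intro j
    induction j with
    | zero => intro x hx; simpa using hx
    | succ j ih =>
      intro x hx
      rw [Function.iterate_succ_apply]
      exact ih _ (Real.exp_pos _)
  have hG : (fun x => Real.exp ((r:ℝ) * (x - 1)))^[t] s₀ ≤ 1 + 1 / (10 * (t:ℝ)) :=
    iterate_bound ε hε0 hε1 r hr t ht hεt
  have hne : ∀ k : ℕ, ENNReal.ofReal (s₀ ^ k) * P k ≠ ∞ :=
    fun k => ENNReal.mul_ne_top ENNReal.ofReal_ne_top (P.apply_ne_top k)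
  have hterm : ∀ k : ℕ, (ENNReal.ofReal (s₀ ^ k) * P k).toReal
      = Real.exp ((k:ℝ) / (20 * (t:ℝ))) * (P k).toReal := by
    intro k
    rw [ENNReal.toReal_mul, ENNReal.toReal_ofReal (by positivity), hsk k]
  have part1 : (∑' k : ℕ, Real.exp ((k : ℝ) / (20 * (t : ℝ))) * (P k).toReal)
      ≤ 1 + 1 / (10 * (t : ℝ)) := by
    calc (∑' k : ℕ, Real.exp ((k : ℝ) / (20 * (t : ℝ))) * (P k).toReal)
        = ∑' k : ℕ, (ENNReal.ofReal (s₀ ^ k) * P k).toReal :=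
          tsum_congr fun k => (hterm k).symm
      _ = (∑' k : ℕ, ENNReal.ofReal (s₀ ^ k) * P k).toReal :=
          (ENNReal.tsum_toReal_eq hne).symm
      _ = ((fun x => Real.exp ((r:ℝ) * (x - 1)))^[t] s₀) := by
          rw [hE, ENNReal.toReal_ofReal (hGpos t s₀ (Real.exp_pos _)).le]
      _ ≤ 1 + 1 / (10 * (t:ℝ)) := hG
  refine ⟨part1, ?_⟩
  -- Part 2
  intro N hN
  set q : ℕ → ℝ := fun k => (P k).toReal with hq
  set f : ℕ → ℝ := fun k => Real.exp ((k:ℝ) / (20 * (t:ℝ))) * q k with hf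
  have hq0 : ∀ k, 0 ≤ q k := fun k => ENNReal.toReal_nonneg
  have hfin : ∑' k : ℕ, ENNReal.ofReal (s₀ ^ k) * P k ≠ ∞ := by
    rw [hE]; exact ENNReal.ofReal_ne_top
  have hf_sum : Summable f := by
    have h := ENNReal.summable_toReal hfin
    simpa only [hterm] using h
  have hq_sum : Summable q := by
    apply ENNReal.summable_toReal
    rw [P.tsum_coe]; exact ENNReal.one_ne_top
  have hq1 : ∑' k, q k = 1 := by
    have h := ENNReal.tsum_toReal_eq (fun k => P.apply_ne_top k)
    rw [P.tsum_coe] at h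
    simpa using h.symm
  set S : Set ℕ := {k | N ≤ k} with hS
  have hmeas : (P.toMeasure S).toReal = ∑' k, S.indicator q k := by
    rw [PMF.toMeasure_apply P (s := S) (by trivial)]
    rw [ENNReal.tsum_toReal_eq]
    · apply tsum_congr
      intro k
      by_cases hk : k ∈ S
      · simp [Set.indicator_of_mem hk, hq]
      · simp [Set.indicator_of_notMem hk]
    · intro k
      by_cases hk : k ∈ S
      · simp only [Set.indicator_of_mem hk]; exact P.apply_ne_top k
      · simp [Set.indicator_of_notMem hk]
  have hθN1 : 1 ≤ (N:ℝ) / (20 * (t:ℝ)) := by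
    rw [le_div_iff₀ (by positivity)]; linarith
  set E : ℝ := Real.exp ((N:ℝ) / (20 * (t:ℝ))) with hEdef
  have hE0 : 0 < E := Real.exp_pos _
  have hA : (1:ℝ)/2 ≤ 1 - Real.exp (-1) := by
    have := exp_le_inv_one_sub (-1) (by norm_num)
    norm_num at this
    linarith
  have hA0 : 0 < 1 - Real.exp (-1) := by linarith
  set D : ℝ := ((1 - Real.exp (-1)) * E)⁻¹ with hD
  have hD0 : 0 < D := by rw [hD]; positivity
  -- pointwise bound
  have hptw : ∀ k, S.indicator q k + D * q k ≤ D * f k := by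
    intro k
    by_cases hk : k ∈ S
    · rw [Set.indicator_of_mem hk]
      have hkN : (N:ℝ) ≤ (k:ℝ) := by exact_mod_cast hk
      have hEk : E ≤ Real.exp ((k:ℝ) / (20 * (t:ℝ))) := by
        rw [hEdef]
        apply Real.exp_le_exp.mpr
        exact div_le_div_of_nonneg_right hkN (by positivity)
      have hkey : (1 - Real.exp (-1)) * E ≤ Real.exp ((k:ℝ) / (20 * (t:ℝ))) - 1 := by
        have h1 : Real.exp (-1) * E = Real.exp ((N:ℝ) / (20 * (t:ℝ)) - 1) := by
          rw [hEdef, ← Real.exp_add]; ring_nf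
        have h2 : (1:ℝ) ≤ Real.exp ((N:ℝ) / (20 * (t:ℝ)) - 1) :=
          Real.one_le_exp (by linarith)
        nlinarith
      have hDinv : D * ((1 - Real.exp (-1)) * E) = 1 := by
        rw [hD]; field_simp
      have h3 : q k = D * ((1 - Real.exp (-1)) * E) * q k := by rw [hDinv]; ring
      have h4 : D * ((1 - Real.exp (-1)) * E) * q k
          ≤ D * (Real.exp ((k:ℝ) / (20 * (t:ℝ))) - 1) * q k := by
        apply mul_le_mul_of_nonneg_right _ (hq0 k)
        exact mul_le_mul_of_nonneg_left hkey hD0.le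
      have h5 : D * (Real.exp ((k:ℝ) / (20 * (t:ℝ))) - 1) * q k = D * f k - D * q k := by
        rw [hf]; ring
      linarith [h3, h4, h5]
    · rw [Set.indicator_of_notMem hk]
      have h1 : (1:ℝ) ≤ Real.exp ((k:ℝ) / (20 * (t:ℝ))) := Real.one_le_exp (by positivity)
      have h2 : q k ≤ f k := by
        rw [hf]
        nlinarith [hq0 k]
      nlinarith [hq0 k, hD0]
  -- summing
  have hsum : (∑' k, S.indicator q k) + D ≤ D * (1 + 1/(10*(t:ℝ))) := by
    have hls : Summable (fun k => S.indicator q k + D * q k) :=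
      (hq_sum.indicator S).add (hq_sum.mul_left D)
    have h1 : ∑' k, (S.indicator q k + D * q k) ≤ ∑' k, D * f k :=
      Summable.tsum_le_tsum hptw hls (hf_sum.mul_left D)
    rw [Summable.tsum_add (hq_sum.indicator S) (hq_sum.mul_left D), tsum_mul_left, hq1,
      tsum_mul_left] at h1
    have h2 : D * ∑' k, f k ≤ D * (1 + 1/(10*(t:ℝ))) :=
      mul_le_mul_of_nonneg_left part1 hD0.le
    simp only [mul_one] at h1
    exact le_trans h1 h2
  have hbound : (∑' k, S.indicator q k) ≤ D * (1/(10*(t:ℝ))) :=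
    aux_bound _ _ _ hsum
  have hfinal : D * (1/(10*(t:ℝ))) ≤ ((t:ℝ))⁻¹ * Real.exp (-((N : ℝ) / (20 * (t : ℝ)))) := by
    have hexpneg : Real.exp (-((N : ℝ) / (20 * (t : ℝ)))) = E⁻¹ := by
      rw [hEdef, ← Real.exp_neg]
    rw [hexpneg, hD]
    exact aux_final (t:ℝ) E (Real.exp (-1)) hT0 hE0 hA
  rw [hmeas]
  exact le_trans hbound hfinal
end

section
/- Let λ = 1 + ε with ε > 0 sufficiently small, let s solve 1 − s = e^{−λs} and λ* = λ(1−s). Then λ* = 1 − ε + (2/3)ε² − (4/9)ε³ + O(ε⁴) as ε → 0⁺. -/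
lemma exp_chord (a t : ℝ) (ht0 : 0 ≤ t) (ht1 : t ≤ 1) :
    Real.exp (t * a) ≤ t * Real.exp a + (1 - t) := by
  have h := convexOn_exp.2 (Set.mem_univ a) (Set.mem_univ (0:ℝ)) ht0
    (by linarith : (0:ℝ) ≤ 1 - t) (by ring)
  simpa [smul_eq_mul, Real.exp_zero] using h

lemma exp_taylor5 {x : ℝ} (h0 : 0 ≤ x) (h1 : x ≤ 1) :
    |Real.exp (-x) - (1 - x + x^2/2 - x^3/6 + x^4/24)| ≤ x^5/100 := by
  have hx : |(-x)| ≤ 1 := by rwa [abs_neg, abs_of_nonneg h0]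
  have h := Real.exp_bound hx (n := 5) (by norm_num)
  rw [abs_neg, abs_of_nonneg h0] at h
  simp only [Finset.sum_range_succ, Finset.sum_range_zero] at h
  norm_num [Nat.factorial] at h
  have e1 : (1:ℝ) + -x + x ^ 2 / 2 + (-x) ^ 3 / 6 + x ^ 4 / 24
      = 1 - x + x^2/2 - x^3/6 + x^4/24 := by ring
  rw [e1] at h
  linarith [h, abs_nonneg (Real.exp (-x) - (1 - x + x^2/2 - x^3/6 + x^4/24))]

lemma exp_quad {x : ℝ} (h0 : 0 ≤ x) (h1 : x ≤ 1) :
    Real.exp x ≤ 1 + x + x^2 := by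
  have h := Real.exp_bound' h0 h1 (n := 2) (by norm_num)
  simp only [Finset.sum_range_succ, Finset.sum_range_zero] at h
  norm_num [Nat.factorial] at h
  nlinarith [sq_nonneg x]

lemma root_lt {l s a : ℝ} (hs : 0 < s) (heq : 1 - s = Real.exp (-(l * s)))
    (ha : 0 < a) (hfa : Real.exp (-(l * a)) < 1 - a) : a < s := by
  by_contra hcon
  push_neg at hcon
  have ht0 : 0 < s / a := div_pos hs ha
  have ht1 : s / a ≤ 1 := (div_le_one ha).2 hcon
  have hta : s / a * a = s := div_mul_cancel₀ _ (ne_of_gt ha)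
  have h := exp_chord (-(l*a)) (s/a) ht0.le ht1
  rw [show s/a * -(l*a) = -(l*(s/a*a)) by ring, hta] at h
  nlinarith [mul_lt_mul_of_pos_left hfa ht0]

lemma root_gt {l s b : ℝ} (hs : 0 < s) (heq : 1 - s = Real.exp (-(l * s)))
    (hb : 0 < b) (hfb : 1 - b < Real.exp (-(l * b))) : s < b := by
  by_contra hcon
  push_neg at hcon
  have ht0 : 0 < b / s := div_pos hb hs
  have ht1 : b / s ≤ 1 := (div_le_one hs).2 hcon
  have hts : b / s * s = b := div_mul_cancel₀ _ (ne_of_gt hs)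
  have h := exp_chord (-(l*s)) (b/s) ht0.le ht1
  rw [show b/s * -(l*s) = -(l*(b/s*s)) by ring, hts] at h
  nlinarith [mul_lt_mul_of_pos_left (lt_of_le_of_ne (le_of_eq heq) (by intro hh; exact absurd hh.symm (by nlinarith))) ht0]

/-- auxiliary: the center of the bracketing interval, times `1+ε`. -/
noncomputable def Uu (ε : ℝ) : ℝ := 2*ε - 2/3*ε^2 + 4/9*ε^3

lemma pow_step {ε : ℝ} (h0 : 0 < ε) (h1 : ε ≤ 1/100) (n : ℕ) :
    ε^(n+1) ≤ (1/100) * ε^n := by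
  have hn : 0 ≤ ε^n := pow_nonneg h0.le n
  calc ε^(n+1) = ε * ε^n := by ring
    _ ≤ (1/100) * ε^n := mul_le_mul_of_nonneg_right h1 hn

lemma Uu_nonneg {ε : ℝ} (h0 : 0 < ε) (h1 : ε ≤ 1/100) : 0 ≤ Uu ε := by
  simp only [Uu]; nlinarith

lemma Uu_ge {ε : ℝ} (h0 : 0 < ε) (h1 : ε ≤ 1/100) : ε ≤ Uu ε := by
  simp only [Uu]; nlinarith

lemma Uu_le {ε : ℝ} (h0 : 0 < ε) (h1 : ε ≤ 1/100) : Uu ε ≤ 2*ε := by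
  simp only [Uu]; nlinarith

lemma Uu_le_one {ε : ℝ} (h0 : 0 < ε) (h1 : ε ≤ 1/100) : Uu ε ≤ 1 := by
  simp only [Uu]; nlinarith

lemma polyQ1 {ε : ℝ} (h0 : 0 < ε) (h1 : ε ≤ 1/100) :
    (1+ε) * (1 - (1 - Uu ε + (Uu ε)^2/2 - (Uu ε)^3/6 + (Uu ε)^4/24)) - Uu ε ≤ ε^5 := by
  simp only [Uu]
  nlinarith [pow_step h0 h1 5, pow_step h0 h1 6, pow_step h0 h1 7, pow_step h0 h1 8,
    pow_step h0 h1 9, pow_step h0 h1 10, pow_step h0 h1 11, pow_step h0 h1 12,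
    pow_nonneg h0.le 5, pow_nonneg h0.le 6, pow_nonneg h0.le 7, pow_nonneg h0.le 8,
    pow_nonneg h0.le 9, pow_nonneg h0.le 10, pow_nonneg h0.le 11, pow_nonneg h0.le 12,
    pow_nonneg h0.le 13]

lemma polyQ2 {ε : ℝ} (h0 : 0 < ε) (h1 : ε ≤ 1/100) :
    -(ε^5) ≤ (1+ε) * (1 - (1 - Uu ε + (Uu ε)^2/2 - (Uu ε)^3/6 + (Uu ε)^4/24)) - Uu ε := by
  simp only [Uu]
  nlinarith [pow_step h0 h1 5, pow_step h0 h1 6, pow_step h0 h1 7, pow_step h0 h1 8,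
    pow_step h0 h1 9, pow_step h0 h1 10, pow_step h0 h1 11, pow_step h0 h1 12,
    pow_nonneg h0.le 5, pow_nonneg h0.le 6, pow_nonneg h0.le 7, pow_nonneg h0.le 8,
    pow_nonneg h0.le 9, pow_nonneg h0.le 10, pow_nonneg h0.le 11, pow_nonneg h0.le 12,
    pow_nonneg h0.le 13]

lemma polyII {ε : ℝ} (h0 : 0 < ε) (h1 : ε ≤ 1/100) :
    (1+ε) * ((1 - Uu ε + (Uu ε)^2/2 - (Uu ε)^3/6 + (Uu ε)^4/24) + (Uu ε)^5/100)
      ≤ 1 - ε/2 := by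
  simp only [Uu]
  nlinarith [pow_step h0 h1 1, pow_step h0 h1 2, pow_step h0 h1 3, pow_step h0 h1 4,
    pow_step h0 h1 5, pow_step h0 h1 6, pow_step h0 h1 7, pow_step h0 h1 8,
    pow_step h0 h1 9, pow_step h0 h1 10, pow_step h0 h1 11, pow_step h0 h1 12,
    pow_step h0 h1 13, pow_step h0 h1 14, pow_step h0 h1 15,
    pow_nonneg h0.le 2, pow_nonneg h0.le 3, pow_nonneg h0.le 4,
    pow_nonneg h0.le 5, pow_nonneg h0.le 6, pow_nonneg h0.le 7, pow_nonneg h0.le 8,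
    pow_nonneg h0.le 9, pow_nonneg h0.le 10, pow_nonneg h0.le 11, pow_nonneg h0.le 12,
    pow_nonneg h0.le 13, pow_nonneg h0.le 14, pow_nonneg h0.le 15, pow_nonneg h0.le 16]

/-- for `λ = 1 + ε` with `ε → 0⁺`, the dual parameter `λ* = λ(1-s)`, where `s`
solves `1 - s = e^{-λs}`, satisfies `λ* = 1 - ε + (2/3)ε² - (4/9)ε³ + O(ε⁴)`. -/
theorem dual_parameter_expansion :
    ∃ C ε₀ : ℝ, 0 < C ∧ 0 < ε₀ ∧
      ∀ ε : ℝ, 0 < ε → ε < ε₀ → ∀ s lamstar : ℝ,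
        0 < s → s < 1 → 1 - s = Real.exp (-((1 + ε) * s)) →
        lamstar = (1 + ε) * (1 - s) →
        |lamstar - (1 - ε + (2 / 3) * ε ^ 2 - (4 / 9) * ε ^ 3)| ≤ C * ε ^ 4 := by
  refine ⟨16, 1/100, by norm_num, by norm_num, ?_⟩
  intro ε hε hε0 s lamstar hs0 hs1 heq hlam
  have h1 : ε ≤ 1/100 := hε0.le
  obtain ⟨L, hLdef⟩ : ∃ L : ℝ, L = 1 + ε := ⟨_, rfl⟩
  obtain ⟨u, hudef⟩ : ∃ u : ℝ, u = Uu ε := ⟨_, rfl⟩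
  rw [← hLdef] at heq hlam
  have hLpos : 0 < L := by rw [hLdef]; linarith
  have hL1 : 1 ≤ L := by rw [hLdef]; linarith
  have hL2 : L ≤ 2 := by rw [hLdef]; linarith
  have hLne : L ≠ 0 := ne_of_gt hLpos
  have hu0 : 0 ≤ u := hudef ▸ Uu_nonneg hε h1
  have huε : ε ≤ u := hudef ▸ Uu_ge hε h1
  have hu2 : u ≤ 2*ε := hudef ▸ Uu_le hε h1
  have hu1 : u ≤ 1 := hudef ▸ Uu_le_one hε h1
  have hε4 : 0 < ε^4 := pow_pos hε 4
  have hε5 : 0 < ε^5 := pow_pos hε 5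
  have h16 : 16*ε^4 < ε := by
    linarith only [pow_step hε h1 1, pow_step hε h1 2, pow_step hε h1 3, hε]
  have h16' : 16*ε^4 ≤ ε := h16.le
  have hLh0 : 0 ≤ L * (8*ε^4) := by positivity
  have hLh16 : L * (8*ε^4) ≤ 16*ε^4 := by
    linarith only [mul_le_mul_of_nonneg_right hL2 hε4.le]
  have hLh1 : L * (8*ε^4) ≤ 1 := by linarith
  -- Taylor bounds for E = exp(-u)
  obtain ⟨E, hEdef⟩ : ∃ E : ℝ, E = Real.exp (-u) := ⟨_, rfl⟩
  have hEpos : 0 < E := hEdef ▸ Real.exp_pos _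
  have hT := exp_taylor5 hu0 hu1
  rw [← hEdef] at hT
  obtain ⟨hT2, hT1⟩ := abs_le.mp hT
  have hu5 : u^5 ≤ 32*ε^5 := by
    calc u^5 ≤ (2*ε)^5 := pow_le_pow_left₀ hu0 hu2 5
      _ = 32*ε^5 := by ring
  have hLu5 : L * (u^5/100) ≤ (64/100)*ε^5 := by
    have h5 : (0:ℝ) ≤ u^5/100 := by positivity
    calc L * (u^5/100) ≤ 2 * (u^5/100) := mul_le_mul_of_nonneg_right hL2 h5
      _ ≤ 2 * (32*ε^5/100) := by linarith
      _ = (64/100)*ε^5 := by ring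
  -- key bound (II): L * E ≤ 1 - ε/2
  have hLE : L * E ≤ 1 - ε/2 := by
    have step : L * E ≤ L * ((1 - u + u^2/2 - u^3/6 + u^4/24) + u^5/100) :=
      mul_le_mul_of_nonneg_left (by linarith) hLpos.le
    have hp := polyII hε h1
    rw [← hudef] at hp
    rw [← hLdef] at hp
    linarith
  have hLE1 : L * E ≤ 1 := by linarith
  -- key bounds (I): |L*E - (L - u)| ≤ 2 ε^5
  have hQ1 := polyQ1 hε h1
  have hQ2 := polyQ2 hε h1
  rw [← hudef, ← hLdef] at hQ1 hQ2
  have hE1 : L * E ≤ L - u + 2*ε^5 := by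
    have step : L * E ≤ L * ((1 - u + u^2/2 - u^3/6 + u^4/24) + u^5/100) :=
      mul_le_mul_of_nonneg_left (by linarith) hLpos.le
    linarith only [step, hQ2, hLu5, hε5.le]
  have hE2 : L - u - 2*ε^5 ≤ L * E := by
    have step : L * ((1 - u + u^2/2 - u^3/6 + u^4/24) - u^5/100) ≤ L * E :=
      mul_le_mul_of_nonneg_left (by linarith) hLpos.le
    linarith only [step, hQ1, hLu5, hε5.le]
  -- geometry of bracketing points
  have ha_pos : 0 < u/L - 8*ε^4 := by
    rw [sub_pos, lt_div_iff₀ hLpos]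
    linarith only [huε, hLh16, h16]
  have hb_pos : 0 < u/L + 8*ε^4 := by positivity
  have harg1 : L * (u/L - 8*ε^4) = u - L*(8*ε^4) := by field_simp
  have harg2 : L * (u/L + 8*ε^4) = u + L*(8*ε^4) := by field_simp
  have hsmall : 256*ε^8 ≤ ε^5 := by
    linarith only [pow_step hε h1 5, pow_step hε h1 6, pow_step hε h1 7, hε5.le]
  have hLhsq : (L*(8*ε^4))^2 ≤ 256*ε^8 := by
    calc (L*(8*ε^4))^2 ≤ (16*ε^4)^2 := pow_le_pow_left₀ hLh0 hLh16 2
      _ = 256*ε^8 := by ring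
  have hεLh : 4*ε^5 ≤ ε/2 * (L*(8*ε^4)) := by
    have e1 : ε/2 * ((1+ε)*(8*ε^4)) = 4*ε^5 + 4*ε^6 := by ring
    rw [hLdef]
    linarith only [e1, pow_nonneg hε.le 6]
  -- lower bracket: exp(-(L*a)) < 1 - a
  have ha_lt : u/L - 8*ε^4 < s := by
    apply root_lt hs0 heq ha_pos
    rw [harg1, show -(u - L*(8*ε^4)) = -u + L*(8*ε^4) by ring, Real.exp_add, ← hEdef]
    rw [show (1:ℝ) - (u/L - 8*ε^4) = (L - u + L*(8*ε^4))/L by field_simp; ring]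
    rw [lt_div_iff₀ hLpos]
    obtain ⟨X, hXdef⟩ : ∃ X : ℝ, X = Real.exp (L*(8*ε^4)) := ⟨_, rfl⟩
    rw [← hXdef]
    have hX : X ≤ 1 + L*(8*ε^4) + (L*(8*ε^4))^2 := hXdef ▸ exp_quad hLh0 hLh1
    have hXpos : 0 < X := hXdef ▸ Real.exp_pos _
    have c1 : E * X * L = (L*E) * X := by ring
    have c2 : (L*E) * X ≤ (L*E) * (1 + L*(8*ε^4) + (L*(8*ε^4))^2) :=
      mul_le_mul_of_nonneg_left hX (by positivity)
    have c3 : (L*E) * (1 + L*(8*ε^4) + (L*(8*ε^4))^2)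
        = L*E + (L*E)*(L*(8*ε^4)) + (L*E)*(L*(8*ε^4))^2 := by ring
    have c4 : (L*E)*(L*(8*ε^4)) ≤ (1 - ε/2)*(L*(8*ε^4)) :=
      mul_le_mul_of_nonneg_right hLE hLh0
    have c5 : (L*E)*(L*(8*ε^4))^2 ≤ (L*(8*ε^4))^2 := by
      have := mul_le_mul_of_nonneg_right hLE1 (sq_nonneg (L*(8*ε^4)))
      linarith
    have c6 : (1 - ε/2)*(L*(8*ε^4)) = L*(8*ε^4) - ε/2 * (L*(8*ε^4)) := by ring
    linarith
  -- upper bracket: 1 - b < exp(-(L*b))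
  have hb_gt : s < u/L + 8*ε^4 := by
    apply root_gt hs0 heq hb_pos
    rw [harg2, show -(u + L*(8*ε^4)) = -u + -(L*(8*ε^4)) by ring, Real.exp_add, ← hEdef]
    rw [show (1:ℝ) - (u/L + 8*ε^4) = (L - u - L*(8*ε^4))/L by field_simp; ring]
    rw [div_lt_iff₀ hLpos]
    obtain ⟨Y, hYdef⟩ : ∃ Y : ℝ, Y = Real.exp (-(L*(8*ε^4))) := ⟨_, rfl⟩
    rw [← hYdef]
    have hY : 1 - L*(8*ε^4) ≤ Y := by
      have := Real.add_one_le_exp (-(L*(8*ε^4)))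
      rw [← hYdef] at this; linarith
    have c1 : E * Y * L = (L*E) * Y := by ring
    have c2 : (L*E) * (1 - L*(8*ε^4)) ≤ (L*E) * Y :=
      mul_le_mul_of_nonneg_left hY (by positivity)
    have c3 : (L*E) * (1 - L*(8*ε^4)) = L*E - (L*E)*(L*(8*ε^4)) := by ring
    have c4 : (L*E)*(L*(8*ε^4)) ≤ (1 - ε/2)*(L*(8*ε^4)) :=
      mul_le_mul_of_nonneg_right hLE hLh0
    have c6 : (1 - ε/2)*(L*(8*ε^4)) = L*(8*ε^4) - ε/2 * (L*(8*ε^4)) := by ring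
    linarith
  -- conclusion
  have hP : 1 - ε + (2/3)*ε^2 - (4/9)*ε^3 = L - u := by
    rw [hLdef, hudef]; simp only [Uu]; ring
  rw [hlam, hP]
  have m1 : L * (u/L - 8*ε^4) < L * s := mul_lt_mul_of_pos_left ha_lt hLpos
  have m2 : L * s < L * (u/L + 8*ε^4) := mul_lt_mul_of_pos_left hb_gt hLpos
  rw [harg1] at m1
  rw [harg2] at m2
  rw [show L * (1 - s) - (L - u) = u - L*s by ring]
  rw [abs_le]
  constructor <;> linarith
end
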